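/- arXiv:2212.14609 — 2 statements merged into one kernel-verified Lean document; each statement's English description precedes it below -/
import Mathlib

section
/- Let n and r be positive integers and let γ : {1,…,n} → {0,1,…,r−1} be a function. Let (ã_{ij}) be an n×n matrix with entries in the formal power series ring ℂ[[z]]. Define an n×n matrix A with entries in ℂ[[t]] by A_{ij} = t^{r−γ(j)−1+γ(i)}·ã_{ij}(t^r) when γ(i) ≤ γ(j), and A_{ij} = t^{γ(i)−1−γ(j)}·ã_{ij}(t^r) when γ(i) > γ(j); define an n×n matrix Ā with entries in ℂ[[z]] by Ā_{ij} = (1/r)·z·ã_{ij}(z) when γ(i) ≤ γ(j), and Ā_{ij} = (1/r)·ã_{ij}(z) when γ(i) > γ(j). Write the characteristic polynomials as det(λI − A) = λ^n + a_1(t)λ^{n−1} + ⋯ + a_n(t) and det(λI − Ā) = λ^n + ā_1(z)λ^{n−1} + ⋯ + ā_n(z). Then for every 1 ≤ k ≤ n one has the identity t^k·a_k(t) = r^k·ā_k(t^r) in ℂ[[t]]. -/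
/-- The power series `g(t^r)` obtained from `g ∈ ℂ[[z]]` by the substitution `z ↦ t^r`. -/
noncomputable def substPow (r : ℕ) (g : PowerSeries ℂ) : PowerSeries ℂ :=
  PowerSeries.mk fun k => if r ∣ k then PowerSeries.coeff (k / r) g else 0

namespace substPowAux

lemma coeff_substPow (r : ℕ) (g : PowerSeries ℂ) (k : ℕ) :
    PowerSeries.coeff k (substPow r g) =
      if r ∣ k then PowerSeries.coeff (k / r) g else 0 := PowerSeries.coeff_mk _ _

lemma substPow_C (r : ℕ) (hr : 0 < r) (a : ℂ) :
    substPow r (PowerSeries.C a) = PowerSeries.C a := by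
  ext k
  rw [coeff_substPow]
  by_cases hdvd : r ∣ k
  · obtain ⟨m, rfl⟩ := hdvd
    rw [if_pos ⟨m, rfl⟩, Nat.mul_div_cancel_left m hr, PowerSeries.coeff_C,
      PowerSeries.coeff_C]
    by_cases hm : m = 0
    · subst hm; simp
    · rw [if_neg hm, if_neg (by simp [Nat.mul_eq_zero, hr.ne', hm])]
  · rw [if_neg hdvd, PowerSeries.coeff_C,
      if_neg (by rintro rfl; exact hdvd ⟨0, (mul_zero r).symm⟩)]

lemma substPow_X (r : ℕ) (hr : 0 < r) :
    substPow r (PowerSeries.X : PowerSeries ℂ) = PowerSeries.X ^ r := by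
  ext k
  rw [coeff_substPow, PowerSeries.coeff_X_pow]
  by_cases hdvd : r ∣ k
  · obtain ⟨m, rfl⟩ := hdvd
    rw [if_pos ⟨m, rfl⟩, Nat.mul_div_cancel_left m hr, PowerSeries.coeff_X]
    by_cases hm : m = 1
    · subst hm; rw [if_pos rfl, if_pos (mul_one r)]
    · rw [if_neg hm,
        if_neg fun hc => hm (Nat.eq_of_mul_eq_mul_left hr (by rw [hc, mul_one]))]
  · rw [if_neg hdvd, if_neg (fun hk : k = r => hdvd (hk ▸ dvd_refl r))]

lemma substPow_add (r : ℕ) (g h : PowerSeries ℂ) :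
    substPow r (g + h) = substPow r g + substPow r h := by
  ext k
  rw [map_add, coeff_substPow, coeff_substPow, coeff_substPow]
  split_ifs with h1
  · rw [map_add]
  · rw [add_zero]

lemma substPow_mul (r : ℕ) (hr : 0 < r) (g h : PowerSeries ℂ) :
    substPow r (g * h) = substPow r g * substPow r h := by
  ext k
  rw [coeff_substPow, PowerSeries.coeff_mul, PowerSeries.coeff_mul]
  by_cases hdvd : r ∣ k
  · obtain ⟨m, rfl⟩ := hdvd
    rw [if_pos ⟨m, rfl⟩, Nat.mul_div_cancel_left m hr]
    have hsub : (Finset.HasAntidiagonal.antidiagonal m).image (fun p => (r * p.1, r * p.2)) ⊆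
        Finset.HasAntidiagonal.antidiagonal (r * m) := by
      intro p hp
      simp only [Finset.mem_image, Finset.HasAntidiagonal.mem_antidiagonal] at hp ⊢
      obtain ⟨q, hq, rfl⟩ := hp
      rw [← Nat.mul_add, hq]
    have hzero : ∀ x ∈ Finset.HasAntidiagonal.antidiagonal (r * m),
        x ∉ (Finset.HasAntidiagonal.antidiagonal m).image (fun p => (r * p.1, r * p.2)) →
        PowerSeries.coeff x.1 (substPow r g) * PowerSeries.coeff x.2 (substPow r h) = 0 := by
      intro x hx hnx
      rw [coeff_substPow]
      by_cases h1 : r ∣ x.1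
      · exfalso
        apply hnx
        rw [Finset.HasAntidiagonal.mem_antidiagonal] at hx
        obtain ⟨u, hu⟩ := h1
        have hum : u ≤ m := Nat.le_of_mul_le_mul_left (by omega) hr
        have hsplit : r * m = r * u + r * (m - u) := by
          rw [← Nat.mul_add]; congr 1; omega
        have h2 : x.2 = r * (m - u) := by omega
        simp only [Finset.mem_image, Finset.HasAntidiagonal.mem_antidiagonal]
        exact ⟨(u, m - u), by omega, by rw [← hu, ← h2]⟩
      · rw [if_neg h1, zero_mul]
    rw [← Finset.sum_subset hsub hzero, Finset.sum_image (fun p _ q _ hpq => by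
      simp only [Prod.mk.injEq] at hpq
      exact Prod.ext (Nat.eq_of_mul_eq_mul_left hr hpq.1)
        (Nat.eq_of_mul_eq_mul_left hr hpq.2))]
    refine Finset.sum_congr rfl fun p _ => ?_
    rw [coeff_substPow, coeff_substPow, if_pos ⟨p.1, rfl⟩, if_pos ⟨p.2, rfl⟩,
      Nat.mul_div_cancel_left _ hr, Nat.mul_div_cancel_left _ hr]
  · rw [if_neg hdvd]
    refine (Finset.sum_eq_zero fun p hp => ?_).symm
    rw [Finset.HasAntidiagonal.mem_antidiagonal] at hp
    rw [coeff_substPow, coeff_substPow]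
    by_cases h1 : r ∣ p.1
    · by_cases h2 : r ∣ p.2
      · exact absurd (hp ▸ Nat.dvd_add h1 h2) hdvd
      · rw [if_neg h2, mul_zero]
    · rw [if_neg h1, zero_mul]

noncomputable def substPowHom (r : ℕ) (hr : 0 < r) : PowerSeries ℂ →+* PowerSeries ℂ where
  toFun := substPow r
  map_one' := by simpa using substPow_C r hr 1
  map_mul' := substPow_mul r hr
  map_zero' := by simpa using substPow_C r hr 0
  map_add' := substPow_add r

@[simp] lemma substPowHom_apply (r : ℕ) (hr : 0 < r) (g : PowerSeries ℂ) :
    substPowHom r hr g = substPow r g := rfl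

end substPowAux

open Polynomial


lemma coeff_eval₂_C_mul_X {R : Type*} [CommRing R] (p : R[X]) (c : R) (m : ℕ) :
    (p.eval₂ C (C c * X)).coeff m = p.coeff m * c ^ m := by
  induction p using Polynomial.induction_on' with
  | add p q hp hq => simp [hp, hq, add_mul]
  | monomial k a =>
      simp only [eval₂_monomial, mul_pow, ← C_pow, coeff_monomial]
      rw [← mul_assoc, ← C_mul, coeff_C_mul, coeff_X_pow]
      split_ifs with h1 h2 h2
      · subst h1; ring
      · omega
      · omega
      · ring

lemma charpoly_smul_coeff {R : Type*} [CommRing R] [IsDomain R] {n : ℕ}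
    (A : Matrix (Fin n) (Fin n) R) (c : R) (hc : c ≠ 0) (k : ℕ) (hk : k ≤ n) :
    ((c • A).charpoly).coeff (n - k) = c ^ k * A.charpoly.coeff (n - k) := by
  set f : R[X] →+* R[X] := eval₂RingHom Polynomial.C (C c * X) with hf
  have hentry : ∀ i j, f ((Matrix.charmatrix (c • A)) i j) =
      ((C c) • Matrix.charmatrix A) i j := by
    intro i j
    by_cases h : i = j
    · subst h
      simp [hf, Matrix.charmatrix_apply_eq, smul_eq_mul, C_mul, mul_sub]
    · simp [hf, Matrix.charmatrix_apply_ne _ _ _ h, smul_eq_mul, C_mul, mul_neg]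
  have hmat : f.mapMatrix (Matrix.charmatrix (c • A)) = (C c) • Matrix.charmatrix A := by
    refine Matrix.ext fun i j => ?_
    simpa using hentry i j
  have hdet : f ((c • A).charpoly) = (C c) ^ n * A.charpoly := by
    rw [Matrix.charpoly, RingHom.map_det, hmat, Matrix.det_smul, Fintype.card_fin,
      Matrix.charpoly]
  have hco := congrArg (fun p => Polynomial.coeff p (n - k)) hdet
  rw [hf] at hco
  rw [show ((eval₂RingHom C (C c * X)) ((c • A).charpoly)) =
    ((c • A).charpoly).eval₂ C (C c * X) from rfl] at hco
  rw [coeff_eval₂_C_mul_X, ← C_pow, coeff_C_mul] at hco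
  have hpow : c ^ n = c ^ k * c ^ (n - k) := by
    rw [← pow_add]
    congr 1
    omega
  have hcancel : (c • A).charpoly.coeff (n - k) * c ^ (n - k) =
      (c ^ k * A.charpoly.coeff (n - k)) * c ^ (n - k) := by
    rw [hco, hpow]; ring
  exact mul_right_cancel₀ (pow_ne_zero _ hc) hcancel

lemma charpoly_eq_of_mul_eq {R : Type*} [CommRing R] [IsDomain R] {n : ℕ}
    (P M E : Matrix (Fin n) (Fin n) R) (h : P * E = E * M) (hE : E.det ≠ 0) :
    P.charpoly = M.charpoly := by
  set Cm : Matrix (Fin n) (Fin n) R →+* Matrix (Fin n) (Fin n) R[X] :=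
    (C : R →+* R[X]).mapMatrix with hCm
  have key : Matrix.charmatrix P * Cm E = Cm E * Matrix.charmatrix M := by
    have hscal : Matrix.scalar (Fin n) (X : R[X]) * Cm E = Cm E * Matrix.scalar (Fin n) X :=
      (Matrix.scalar_commute _ (fun r' => Commute.all _ _) _).eq
    have hmul : Cm P * Cm E = Cm E * Cm M := by
      rw [← map_mul, ← map_mul, h]
    unfold Matrix.charmatrix
    rw [sub_mul, mul_sub, hscal, hmul]
  have hdd := congrArg Matrix.det key
  rw [Matrix.det_mul, Matrix.det_mul] at hdd
  have hC : (Cm E).det = C E.det := (RingHom.map_det _ _).symm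
  rw [hC] at hdd
  have hfin : P.charpoly * C E.det = M.charpoly * C E.det := by
    rw [Matrix.charpoly, Matrix.charpoly, hdd, mul_comm]
  exact mul_right_cancel₀ (by simpa using hE) hfin

open substPowAux Polynomial

/-- The paper's relation (rela char) comparing the characteristic polynomial of a
`μ_r`-equivariant Higgs field on `Spec ℂ[[t]]` with that of its pushforward to the coarse
disc `Spec ℂ[[z]]`, `z = t^r`: writing `det(λI − A) = λ^n + a_1(t)λ^{n−1} + ⋯ + a_n(t)` and
`det(λI − Ā) = λ^n + ā_1(z)λ^{n−1} + ⋯ + ā_n(z)`, one has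
`t^k · a_k(t) = r^k · ā_k(t^r)` for `1 ≤ k ≤ n`. -/
theorem stmt4 (n r : ℕ) (hn : 0 < n) (hr : 0 < r)
    (γ : Fin n → ℕ) (hγ : ∀ i, γ i < r)
    (atil : Fin n → Fin n → PowerSeries ℂ)
    (A Abar : Matrix (Fin n) (Fin n) (PowerSeries ℂ))
    (hA : ∀ i j, A i j =
      if γ i ≤ γ j then PowerSeries.X ^ (r - γ j - 1 + γ i) * substPow r (atil i j)
      else PowerSeries.X ^ (γ i - 1 - γ j) * substPow r (atil i j))
    (hAbar : ∀ i j, Abar i j =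
      if γ i ≤ γ j then PowerSeries.C (1 / (r : ℂ)) * PowerSeries.X * atil i j
      else PowerSeries.C (1 / (r : ℂ)) * atil i j) :
    ∀ k : ℕ, 1 ≤ k → k ≤ n →
      PowerSeries.X ^ k * (Matrix.charpoly A).coeff (n - k) =
        PowerSeries.C (r : ℂ) ^ k * substPow r ((Matrix.charpoly Abar).coeff (n - k)) := by
  intro k hk1 hkn
  have hrC : ((r : ℂ)) ≠ 0 := Nat.cast_ne_zero.mpr hr.ne'
  set S : PowerSeries ℂ →+* PowerSeries ℂ := substPowHom r hr with hS
  set M : Matrix (Fin n) (Fin n) (PowerSeries ℂ) := fun i j =>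
    if γ i ≤ γ j then PowerSeries.X ^ r * substPow r (atil i j)
    else substPow r (atil i j) with hM
  have hMdef : ∀ i j, M i j =
      if γ i ≤ γ j then PowerSeries.X ^ r * substPow r (atil i j)
      else substPow r (atil i j) := fun i j => rfl
  -- M is the entrywise substPow image of (C r) • Abar
  have hMeq : M = ((PowerSeries.C (r : ℂ)) • Abar).map S := by
    refine Matrix.ext fun i j => ?_
    rw [hMdef, Matrix.map_apply, Matrix.smul_apply, smul_eq_mul, hAbar]
    split_ifs with h
    · rw [← mul_assoc, ← mul_assoc, ← map_mul (PowerSeries.C (R := ℂ)),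
        mul_one_div_cancel hrC, map_one, one_mul, map_mul S, hS,
        substPowHom_apply, substPowHom_apply, substPow_X r hr]
    · rw [← mul_assoc, ← map_mul (PowerSeries.C (R := ℂ)), mul_one_div_cancel hrC,
        map_one, one_mul, hS, substPowHom_apply]
  set E : Matrix (Fin n) (Fin n) (PowerSeries ℂ) :=
    Matrix.diagonal (fun i => PowerSeries.X ^ γ i) with hE
  have hdetE : E.det ≠ 0 := by
    rw [hE, Matrix.det_diagonal]
    exact Finset.prod_ne_zero_iff.mpr fun i _ => pow_ne_zero _ PowerSeries.X_ne_zero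
  have hcomm : ((PowerSeries.X : PowerSeries ℂ) • A) * E = E * M := by
    refine Matrix.ext fun i j => ?_
    rw [hE, Matrix.mul_diagonal, Matrix.diagonal_mul, Matrix.smul_apply, smul_eq_mul,
      hA, hMdef]
    by_cases h : γ i ≤ γ j
    · rw [if_pos h, if_pos h]
      have e1 : (1 : ℕ) + (r - γ j - 1 + γ i) + γ j = γ i + r := by
        have := hγ j; omega
      calc PowerSeries.X * (PowerSeries.X ^ (r - γ j - 1 + γ i) * substPow r (atil i j)) *
            PowerSeries.X ^ γ j
          = PowerSeries.X ^ ((1 : ℕ) + (r - γ j - 1 + γ i) + γ j) * substPow r (atil i j) := by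
            ring
        _ = PowerSeries.X ^ (γ i + r) * substPow r (atil i j) := by rw [e1]
        _ = PowerSeries.X ^ γ i * (PowerSeries.X ^ r * substPow r (atil i j)) := by
            ring
    · rw [if_neg h, if_neg h]
      have e1 : (1 : ℕ) + (γ i - 1 - γ j) + γ j = γ i := by omega
      calc PowerSeries.X * (PowerSeries.X ^ (γ i - 1 - γ j) * substPow r (atil i j)) *
            PowerSeries.X ^ γ j
          = PowerSeries.X ^ ((1 : ℕ) + (γ i - 1 - γ j) + γ j) * substPow r (atil i j) := by
            ring
        _ = PowerSeries.X ^ γ i * substPow r (atil i j) := by rw [e1]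
  have h1 : ((PowerSeries.X : PowerSeries ℂ) • A).charpoly = M.charpoly :=
    charpoly_eq_of_mul_eq _ _ _ hcomm hdetE
  have h2 := charpoly_smul_coeff A (PowerSeries.X : PowerSeries ℂ) PowerSeries.X_ne_zero k hkn
  have h3 := charpoly_smul_coeff Abar (PowerSeries.C (r : ℂ))
    (fun hc => hrC (by simpa using congrArg (PowerSeries.constantCoeff) hc)) k hkn
  have h4 : M.charpoly = (((PowerSeries.C (r : ℂ)) • Abar).charpoly).map S := by
    rw [hMeq, Matrix.charpoly_map]
  rw [← h2, h1, h4, Polynomial.coeff_map, h3, map_mul S, map_pow S, hS,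
    substPowHom_apply, substPowHom_apply, substPow_C r hr]
end

section
/- Let A be a commutative ℂ-algebra, let r ≤ s be positive integers, and let f, a_1, …, a_r ∈ A. Let I ⊆ A[t,y] be the ideal generated by y^r + a_1·t^{s−1}·y^{r−1} + a_2·t^{s−2}·y^{r−2} + ⋯ + a_r·t^{s−r} and t^s − f, and set B = A[t,y]/I. The group μ_s of complex s-th roots of unity acts on B by A-algebra automorphisms determined by ζ·t = ζt and ζ·y = ζ^{−1}y (this is well defined because I is stable under these substitutions). Then the A-algebra homomorphism A[w]/(w^r + a_1·f·w^{r−1} + a_2·f·w^{r−2} + ⋯ + a_r·f) → B sending w to the class of t·y is injective, and its image is exactly the subalgebra B^{μ_s} of μ_s-invariant elements of B. -/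
set_option maxHeartbeats 2000000
set_option synthInstance.maxHeartbeats 400000


open MvPolynomial



lemma adjoinRoot_nontrivial {R : Type*} [CommRing R] [Nontrivial R] {p : Polynomial R}
    (hp : p.Monic) (h : 0 < p.natDegree) : Nontrivial (AdjoinRoot p) := by
  refine ⟨1, 0, fun h10 => ?_⟩
  have h1 : (AdjoinRoot.mk p) 1 = AdjoinRoot.mk p 0 := by simpa using h10
  rw [AdjoinRoot.mk_eq_mk, sub_zero] at h1
  have := hp.eq_one_of_isUnit (isUnit_of_dvd_one h1)
  rw [this] at h
  simp at h

lemma basis_exists (A : Type*) [CommRing A] [Nontrivial A]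
    (r s : ℕ) (hr : 0 < r) (hs : 0 < s) (hrs : r ≤ s) (f : A) (a : Fin r → A)
    (I : Ideal (MvPolynomial (Fin 2) A))
    (hI : I = Ideal.span
      {X 1 ^ r + ∑ i : Fin r,
          C (a i) * X 0 ^ (s - ((i : ℕ) + 1)) * X 1 ^ (r - ((i : ℕ) + 1)),
        X 0 ^ s - C f}) :
    ∃ vB : Module.Basis (Fin s × Fin r) A (MvPolynomial (Fin 2) A ⧸ I),
      ∀ ij : Fin s × Fin r,
        vB ij = Ideal.Quotient.mk I (X 0 ^ (ij.1 : ℕ) * X 1 ^ (ij.2 : ℕ)) := by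
  classical
  set mkq := Ideal.Quotient.mk I with hmkq
  set x : MvPolynomial (Fin 2) A ⧸ I := mkq (X 0) with hx
  set z : MvPolynomial (Fin 2) A ⧸ I := mkq (X 1) with hz
  have hG1 : (X 1 ^ r + ∑ i : Fin r,
      C (a i) * X 0 ^ (s - ((i : ℕ) + 1)) * X 1 ^ (r - ((i : ℕ) + 1))) ∈ I := by
    rw [hI]; exact Ideal.subset_span (Set.mem_insert _ _)
  have hG2 : (X 0 ^ s - C f : MvPolynomial (Fin 2) A) ∈ I := by
    rw [hI]; exact Ideal.subset_span (Set.mem_insert_of_mem _ rfl)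
  have hCmk : ∀ c : A, mkq (C c) = algebraMap A _ c := fun c => rfl
  have hsmul : ∀ (c : A) (w : MvPolynomial (Fin 2) A ⧸ I),
      algebraMap A (MvPolynomial (Fin 2) A ⧸ I) c * w = c • w :=
    fun c w => (Algebra.smul_def c w).symm
  have hxs : x ^ s = algebraMap A _ f := by
    have h0 : mkq (X 0 ^ s - C f) = 0 := Ideal.Quotient.eq_zero_iff_mem.2 hG2
    rw [map_sub, map_pow, hCmk, sub_eq_zero] at h0
    exact h0
  have hzr : z ^ r = - ∑ i : Fin r,
      algebraMap A _ (a i) * (x ^ (s - ((i : ℕ) + 1)) * z ^ (r - ((i : ℕ) + 1))) := by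
    have h0 : mkq (X 1 ^ r + ∑ i : Fin r,
        C (a i) * X 0 ^ (s - ((i : ℕ) + 1)) * X 1 ^ (r - ((i : ℕ) + 1))) = 0 :=
      Ideal.Quotient.eq_zero_iff_mem.2 hG1
    rw [map_add, map_sum] at h0
    rw [eq_neg_iff_add_eq_zero, ← map_pow]
    rw [← h0]
    congr 1
    refine Finset.sum_congr rfl fun i _ => ?_
    rw [map_mul, map_mul, map_pow, map_pow, hCmk, mul_assoc]
  -- the model
  set p1 : Polynomial A := Polynomial.X ^ s - Polynomial.C f with hp1def
  have hp1 : p1.Monic := Polynomial.monic_X_pow_sub_C f hs.ne'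
  have hd1 : p1.natDegree = s := Polynomial.natDegree_X_pow_sub_C
  haveI : Nontrivial (AdjoinRoot p1) := adjoinRoot_nontrivial hp1 (by omega)
  set t1 : AdjoinRoot p1 := AdjoinRoot.root p1 with ht1def
  have ht1 : t1 ^ s = algebraMap A (AdjoinRoot p1) f := by
    have h0 := AdjoinRoot.eval₂_root p1
    rw [hp1def] at h0
    rw [Polynomial.eval₂_sub, Polynomial.eval₂_pow, Polynomial.eval₂_X,
      Polynomial.eval₂_C, sub_eq_zero] at h0
    exact h0
  set p2 : Polynomial (AdjoinRoot p1) := Polynomial.X ^ r + ∑ i : Fin r,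
      Polynomial.C (algebraMap A (AdjoinRoot p1) (a i) * t1 ^ (s - ((i : ℕ) + 1))) *
        Polynomial.X ^ (r - ((i : ℕ) + 1)) with hp2def
  have hdeg2 : (∑ i : Fin r,
      Polynomial.C (algebraMap A (AdjoinRoot p1) (a i) * t1 ^ (s - ((i : ℕ) + 1))) *
        Polynomial.X ^ (r - ((i : ℕ) + 1))).degree < ((r : ℕ) : WithBot ℕ) := by
    refine lt_of_le_of_lt (Polynomial.degree_sum_le _ _) ?_
    refine (Finset.sup_lt_iff (by exact_mod_cast WithBot.bot_lt_coe r)).mpr fun i _ => ?_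
    refine lt_of_le_of_lt (Polynomial.degree_C_mul_X_pow_le _ _) ?_
    exact_mod_cast (by omega : r - ((i : ℕ) + 1) < r)
  have hp2 : p2.Monic := Polynomial.monic_X_pow_add hdeg2
  have hd2 : p2.natDegree = r := by
    have : p2.degree = (r : ℕ) := by
      rw [hp2def, Polynomial.degree_add_eq_left_of_degree_lt
        (by rwa [Polynomial.degree_X_pow]), Polynomial.degree_X_pow]
    exact Polynomial.natDegree_eq_of_degree_eq_some this
  set y1 : AdjoinRoot p2 := AdjoinRoot.root p2 with hy1def
  set t2 : AdjoinRoot p2 := algebraMap (AdjoinRoot p1) (AdjoinRoot p2) t1 with ht2def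
  have ht2s : t2 ^ s = algebraMap A (AdjoinRoot p2) f := by
    rw [ht2def, ← map_pow, ht1, ← IsScalarTower.algebraMap_apply]
  have hy1 : y1 ^ r = - ∑ i : Fin r,
      algebraMap A (AdjoinRoot p2) (a i) * t2 ^ (s - ((i : ℕ) + 1)) *
        y1 ^ (r - ((i : ℕ) + 1)) := by
    have h0 := AdjoinRoot.eval₂_root p2
    rw [hp2def] at h0
    rw [Polynomial.eval₂_add, Polynomial.eval₂_pow, Polynomial.eval₂_X,
      Polynomial.eval₂_finset_sum] at h0
    rw [eq_neg_iff_add_eq_zero, ← h0]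
    congr 1
    refine Finset.sum_congr rfl fun i _ => ?_
    rw [Polynomial.eval₂_mul, Polynomial.eval₂_C, Polynomial.eval₂_pow, Polynomial.eval₂_X]
    rw [← AdjoinRoot.algebraMap_eq, map_mul, map_pow, ← IsScalarTower.algebraMap_apply]
  -- the comparison map F
  set g : Fin 2 → AdjoinRoot p2 := fun i => if i = 0 then t2 else y1 with hg
  have hg0 : g 0 = t2 := rfl
  have hg1 : g 1 = y1 := rfl
  have hker : ∀ u ∈ I, (aeval g : MvPolynomial (Fin 2) A →ₐ[A] AdjoinRoot p2) u = 0 := by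
    have hle : I ≤ RingHom.ker (aeval g : MvPolynomial (Fin 2) A →ₐ[A] AdjoinRoot p2) := by
      rw [hI, Ideal.span_le]
      intro u hu
      rcases hu with rfl | hu
      · show (aeval g) _ = 0
        rw [map_add, map_pow, aeval_X, hg1, map_sum]
        rw [hy1, neg_add_eq_zero]
        refine Finset.sum_congr rfl fun i _ => ?_
        simp only [map_mul, map_pow, aeval_X, hg0, hg1, aeval_C]
      · rcases hu with rfl
        show (aeval g) _ = 0
        rw [map_sub, map_pow, aeval_X, hg0, aeval_C, ht2s, sub_self]
    intro u hu
    exact hle hu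
  set F : (MvPolynomial (Fin 2) A ⧸ I) →ₐ[A] AdjoinRoot p2 :=
    Ideal.Quotient.liftₐ I (aeval g) hker with hF
  have hFmk : ∀ p : MvPolynomial (Fin 2) A, F (mkq p) = aeval g p := by
    intro p
    rw [hF, Ideal.Quotient.liftₐ_apply, hmkq]
    rfl
  -- basis of the model
  set pb1 := AdjoinRoot.powerBasis' hp1 with hpb1
  set pb2 := AdjoinRoot.powerBasis' hp2 with hpb2
  have hdim1 : pb1.dim = s := by rw [hpb1, AdjoinRoot.powerBasis'_dim, hd1]
  have hdim2 : pb2.dim = r := by rw [hpb2, AdjoinRoot.powerBasis'_dim, hd2]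
  set b1 : Module.Basis (Fin s) A (AdjoinRoot p1) := pb1.basis.reindex (finCongr hdim1) with hb1
  set b2 : Module.Basis (Fin r) (AdjoinRoot p1) (AdjoinRoot p2) :=
    pb2.basis.reindex (finCongr hdim2) with hb2
  set bB : Module.Basis (Fin s × Fin r) A (AdjoinRoot p2) := b1.smulTower b2 with hbBdef
  have hsmul1 : ∀ (c : AdjoinRoot p1) (w : AdjoinRoot p2),
      algebraMap (AdjoinRoot p1) (AdjoinRoot p2) c * w = c • w :=
    fun c w => (Algebra.smul_def c w).symm
  have hbB : ∀ ij : Fin s × Fin r, bB ij = t2 ^ (ij.1 : ℕ) * y1 ^ (ij.2 : ℕ) := by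
    intro ij
    rw [hbBdef, Module.Basis.smulTower_apply, hb1, hb2, Module.Basis.reindex_apply, Module.Basis.reindex_apply,
      PowerBasis.coe_basis, PowerBasis.coe_basis, ← hsmul1, map_pow]
    rfl
  -- the family v
  set v : Fin s × Fin r → MvPolynomial (Fin 2) A ⧸ I :=
    fun ij => mkq (X 0 ^ (ij.1 : ℕ) * X 1 ^ (ij.2 : ℕ)) with hv
  have hveq : ∀ ij : Fin s × Fin r, v ij = x ^ (ij.1 : ℕ) * z ^ (ij.2 : ℕ) := by
    intro ij
    show mkq (X 0 ^ (ij.1 : ℕ) * X 1 ^ (ij.2 : ℕ)) = _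
    rw [map_mul, map_pow, map_pow]
  have hFv : ∀ ij : Fin s × Fin r, F (v ij) = bB ij := by
    intro ij
    rw [hv, hFmk, map_mul, map_pow, map_pow, aeval_X, aeval_X, hg0, hg1, hbB]
  have hli : LinearIndependent A v := by
    refine LinearIndependent.of_comp F.toLinearMap ?_
    have : (F.toLinearMap ∘ v) = bB := funext fun ij => hFv ij
    rw [this]
    exact bB.linearIndependent
  -- spanning
  set M := Submodule.span A (Set.range v) with hM
  have hmem' : ∀ (i j : ℕ), i < s → j < r → x ^ i * z ^ j ∈ M := by
    intro i j hi hj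
    have h1 : x ^ i * z ^ j = v (⟨i, hi⟩, ⟨j, hj⟩) := (hveq (⟨i, hi⟩, ⟨j, hj⟩)).symm
    rw [h1]
    exact Submodule.subset_span (Set.mem_range_self _)
  have hbase : (1 : MvPolynomial (Fin 2) A ⧸ I) ∈ M := by
    simpa using hmem' 0 0 hs hr
  have hxM : ∀ q ∈ M, x * q ∈ M := by
    have hle : Submodule.span A (Set.range v) ≤
        Submodule.comap (LinearMap.mulLeft A x) M := by
      rw [Submodule.span_le]
      rintro _ ⟨ij, rfl⟩
      show x * v ij ∈ M
      rw [hveq]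
      by_cases h : (ij.1 : ℕ) + 1 < s
      · have : x * (x ^ (ij.1 : ℕ) * z ^ (ij.2 : ℕ)) =
            x ^ ((ij.1 : ℕ) + 1) * z ^ (ij.2 : ℕ) := by ring
        rw [this]
        exact hmem' _ _ h ij.2.2
      · have hie : (ij.1 : ℕ) + 1 = s := by omega
        have h1 : x * (x ^ (ij.1 : ℕ) * z ^ (ij.2 : ℕ)) =
            x ^ ((ij.1 : ℕ) + 1) * z ^ (ij.2 : ℕ) := by ring
        rw [hie] at h1
        rw [h1, hxs, hsmul]
        refine M.smul_mem f ?_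
        have h2 : z ^ (ij.2 : ℕ) = x ^ 0 * z ^ (ij.2 : ℕ) := by ring
        rw [h2]
        exact hmem' 0 _ hs ij.2.2
    intro q hq
    exact hle hq
  have hxpow : ∀ (n : ℕ) (w : MvPolynomial (Fin 2) A ⧸ I), w ∈ M → x ^ n * w ∈ M := by
    intro n
    induction n with
    | zero => intro w hw; simpa using hw
    | succ n ih =>
      intro w hw
      have h1 : x ^ (n + 1) * w = x * (x ^ n * w) := by ring
      rw [h1]
      exact hxM _ (ih w hw)
  have hzrM : z ^ r ∈ M := by
    rw [hzr]
    refine M.neg_mem (Submodule.sum_mem M fun k _ => ?_)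
    rw [hsmul]
    exact M.smul_mem (a k) (hmem' _ _ (by omega) (by omega))
  have hzM : ∀ q ∈ M, z * q ∈ M := by
    have hle : Submodule.span A (Set.range v) ≤
        Submodule.comap (LinearMap.mulLeft A z) M := by
      rw [Submodule.span_le]
      rintro _ ⟨ij, rfl⟩
      show z * v ij ∈ M
      rw [hveq]
      by_cases h : (ij.2 : ℕ) + 1 < r
      · have h1 : z * (x ^ (ij.1 : ℕ) * z ^ (ij.2 : ℕ)) =
            x ^ (ij.1 : ℕ) * z ^ ((ij.2 : ℕ) + 1) := by ring
        rw [h1]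
        exact hmem' _ _ ij.1.2 h
      · have hje : (ij.2 : ℕ) + 1 = r := by omega
        have h1 : z * (x ^ (ij.1 : ℕ) * z ^ (ij.2 : ℕ)) =
            x ^ (ij.1 : ℕ) * z ^ ((ij.2 : ℕ) + 1) := by ring
        rw [hje] at h1
        rw [h1]
        exact hxpow _ _ hzrM
    intro q hq
    exact hle hq
  have hmono : ∀ (n m : ℕ), x ^ n * z ^ m ∈ M := by
    intro n m
    induction n with
    | zero =>
      induction m with
      | zero => simpa using hbase
      | succ m ih =>
        have h1 : x ^ 0 * z ^ (m + 1) = z * (x ^ 0 * z ^ m) := by ring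
        rw [h1]
        exact hzM _ ih
    | succ n ih =>
      have h1 : x ^ (n + 1) * z ^ m = x * (x ^ n * z ^ m) := by ring
      rw [h1]
      exact hxM _ ih
  have htop : ∀ q : MvPolynomial (Fin 2) A ⧸ I, q ∈ M := by
    intro q
    obtain ⟨p, rfl⟩ := Ideal.Quotient.mk_surjective q
    induction p using MvPolynomial.induction_on with
    | C c =>
      have h1 : mkq (C c) = c • (1 : MvPolynomial (Fin 2) A ⧸ I) := by
        rw [hCmk, ← hsmul, mul_one]
      show mkq (C c) ∈ M
      rw [h1]
      exact M.smul_mem c hbase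
    | add p q hp hq =>
      rw [map_add]
      exact M.add_mem hp hq
    | mul_X p i hp =>
      rw [map_mul]
      fin_cases i
      · rw [mul_comm]
        exact hxM _ hp
      · rw [mul_comm]
        exact hzM _ hp
  refine ⟨Module.Basis.mk hli (fun q _ => htop q), fun ij => ?_⟩
  rw [Module.Basis.mk_apply]

/-- The local computation identifying the coarse moduli space of a spectral curve over a
stacky curve: with `B = A[t,y]/(y^r + a_1 t^{s-1} y^{r-1} + ⋯ + a_r t^{s-r}, t^s − f)` and
the `μ_s`-action `ζ·t = ζt`, `ζ·y = ζ⁻¹y`, the `A`-algebra map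
`A[w]/(w^r + a_1 f w^{r-1} + ⋯ + a_r f) → B`, `w ↦ t·y`, is injective with image exactly
the subalgebra of `μ_s`-invariants.  (Here `ψ : A[w] → B` is `w ↦ ty`; the kernel of `ψ`
being the ideal `J = (w^r + a_1 f w^{r-1} + ⋯ + a_r f)` says precisely that the induced map
on `A[w]/J` is well defined and injective, and `Set.range ψ` is its image.) -/
theorem stmt5 (A : Type*) [CommRing A] [Algebra ℂ A]
    (r s : ℕ) (hr : 0 < r) (hs : 0 < s) (hrs : r ≤ s)
    (f : A) (a : Fin r → A)
    (I : Ideal (MvPolynomial (Fin 2) A))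
    (hI : I = Ideal.span
      {X 1 ^ r + ∑ i : Fin r,
          C (a i) * X 0 ^ (s - ((i : ℕ) + 1)) * X 1 ^ (r - ((i : ℕ) + 1)),
        X 0 ^ s - C f})
    (σ : ℂ → (MvPolynomial (Fin 2) A →ₐ[A] MvPolynomial (Fin 2) A))
    (hσ : ∀ ζ : ℂ, σ ζ = aeval (fun i : Fin 2 =>
      if i = 0 then C (algebraMap ℂ A ζ) * X 0 else C (algebraMap ℂ A ζ⁻¹) * X 1))
    (ψ : Polynomial A →ₐ[A] MvPolynomial (Fin 2) A ⧸ I)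
    (hψ : ψ = Polynomial.aeval (Ideal.Quotient.mk I (X 0 * X 1)))
    (J : Ideal (Polynomial A))
    (hJ : J = Ideal.span
      {Polynomial.X ^ r + ∑ i : Fin r,
          Polynomial.C (a i * f) * Polynomial.X ^ (r - ((i : ℕ) + 1))}) :
    RingHom.ker ψ = J ∧
    Set.range ψ = {b : MvPolynomial (Fin 2) A ⧸ I |
      ∀ ζ : ℂ, ζ ^ s = 1 → ∀ p : MvPolynomial (Fin 2) A,
        Ideal.Quotient.mk I p = b → Ideal.Quotient.mk I (σ ζ p) = b} := by
  classical
  rcases subsingleton_or_nontrivial A with hA | hA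
  · haveI : Subsingleton (MvPolynomial (Fin 2) A ⧸ I) :=
      Quotient.instSubsingletonQuotient _
    constructor
    · ext q
      have hq0 : q = 0 := Subsingleton.elim q 0
      subst hq0
      simp
    · ext b
      constructor
      · intro _
        intro ζ _ p _
        exact Subsingleton.elim _ _
      · intro _
        exact ⟨0, Subsingleton.elim _ _⟩
  -- main case
  obtain ⟨vB, hvB⟩ := basis_exists A r s hr hs hrs f a I hI
  set mkq := Ideal.Quotient.mk I with hmkq
  set x : MvPolynomial (Fin 2) A ⧸ I := mkq (X 0) with hx
  set z : MvPolynomial (Fin 2) A ⧸ I := mkq (X 1) with hz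
  have hG1 : (X 1 ^ r + ∑ i : Fin r,
      C (a i) * X 0 ^ (s - ((i : ℕ) + 1)) * X 1 ^ (r - ((i : ℕ) + 1))) ∈ I := by
    rw [hI]; exact Ideal.subset_span (Set.mem_insert _ _)
  have hG2 : (X 0 ^ s - C f : MvPolynomial (Fin 2) A) ∈ I := by
    rw [hI]; exact Ideal.subset_span (Set.mem_insert_of_mem _ rfl)
  have hCmk : ∀ c : A, mkq (C c) = algebraMap A _ c := fun c => rfl
  have hsmul : ∀ (c : A) (w : MvPolynomial (Fin 2) A ⧸ I),
      algebraMap A (MvPolynomial (Fin 2) A ⧸ I) c * w = c • w :=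
    fun c w => (Algebra.smul_def c w).symm
  have hxs : x ^ s = algebraMap A _ f := by
    have h0 : mkq (X 0 ^ s - C f) = 0 := Ideal.Quotient.eq_zero_iff_mem.2 hG2
    rw [map_sub, map_pow, hCmk, sub_eq_zero] at h0
    exact h0
  have hzr0 : z ^ r + ∑ i : Fin r,
      algebraMap A _ (a i) * (x ^ (s - ((i : ℕ) + 1)) * z ^ (r - ((i : ℕ) + 1))) = 0 := by
    have h0 : mkq (X 1 ^ r + ∑ i : Fin r,
        C (a i) * X 0 ^ (s - ((i : ℕ) + 1)) * X 1 ^ (r - ((i : ℕ) + 1))) = 0 :=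
      Ideal.Quotient.eq_zero_iff_mem.2 hG1
    rw [map_add, map_sum, map_pow] at h0
    rw [← h0]
    congr 1
    refine Finset.sum_congr rfl fun i _ => ?_
    rw [map_mul, map_mul, map_pow, map_pow, hCmk, mul_assoc]
  -- basis facts
  have hvBmul : ∀ ij : Fin s × Fin r, vB ij = x ^ (ij.1 : ℕ) * z ^ (ij.2 : ℕ) := by
    intro ij
    rw [hvB, map_mul, map_pow, map_pow]
  have hxzpow : ∀ (m : ℕ) (hm : m < r),
      (x * z) ^ m = vB (⟨m, lt_of_lt_of_le hm hrs⟩, ⟨m, hm⟩) := by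
    intro m hm
    rw [hvBmul, mul_pow]
  -- the generator of J
  set h0 : Polynomial A := Polynomial.X ^ r + ∑ i : Fin r,
      Polynomial.C (a i * f) * Polynomial.X ^ (r - ((i : ℕ) + 1)) with hh0def
  have hdeg0 : (∑ i : Fin r,
      Polynomial.C (a i * f) * Polynomial.X ^ (r - ((i : ℕ) + 1))).degree
        < ((r : ℕ) : WithBot ℕ) := by
    refine lt_of_le_of_lt (Polynomial.degree_sum_le _ _) ?_
    refine (Finset.sup_lt_iff (by exact_mod_cast WithBot.bot_lt_coe r)).mpr fun i _ => ?_
    refine lt_of_le_of_lt (Polynomial.degree_C_mul_X_pow_le _ _) ?_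
    exact_mod_cast (by omega : r - ((i : ℕ) + 1) < r)
  have hh0m : h0.Monic := Polynomial.monic_X_pow_add hdeg0
  have hd0 : h0.degree = (r : ℕ) := by
    rw [hh0def, Polynomial.degree_add_eq_left_of_degree_lt
      (by rwa [Polynomial.degree_X_pow]), Polynomial.degree_X_pow]
  -- ψ kills h0
  have homega : ψ = Polynomial.aeval (x * z) := by
    have hmm : mkq (X 0 * X 1) = x * z := map_mul _ _ _
    rw [hψ, hmm]
  have hterm : ∀ i : Fin r, x ^ r *
      (algebraMap A (MvPolynomial (Fin 2) A ⧸ I) (a i) *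
        (x ^ (s - ((i : ℕ) + 1)) * z ^ (r - ((i : ℕ) + 1)))) =
      algebraMap A _ (a i * f) * (x ^ (r - ((i : ℕ) + 1)) * z ^ (r - ((i : ℕ) + 1))) := by
    intro i
    have h1 : r + (s - ((i : ℕ) + 1)) = s + (r - ((i : ℕ) + 1)) := by omega
    have h2 : x ^ r * (algebraMap A (MvPolynomial (Fin 2) A ⧸ I) (a i) *
        (x ^ (s - ((i : ℕ) + 1)) * z ^ (r - ((i : ℕ) + 1)))) =
        algebraMap A (MvPolynomial (Fin 2) A ⧸ I) (a i) *
          (x ^ (r + (s - ((i : ℕ) + 1))) * z ^ (r - ((i : ℕ) + 1))) := by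
      rw [pow_add]; ring
    rw [h2, h1, pow_add, hxs, map_mul]
    ring
  have hxzr : x ^ r * z ^ r + ∑ i : Fin r,
      algebraMap A _ (a i * f) *
        (x ^ (r - ((i : ℕ) + 1)) * z ^ (r - ((i : ℕ) + 1))) = 0 := by
    have h3 : ∑ i : Fin r, algebraMap A (MvPolynomial (Fin 2) A ⧸ I) (a i * f) *
        (x ^ (r - ((i : ℕ) + 1)) * z ^ (r - ((i : ℕ) + 1))) =
        ∑ i : Fin r, x ^ r * (algebraMap A (MvPolynomial (Fin 2) A ⧸ I) (a i) *
          (x ^ (s - ((i : ℕ) + 1)) * z ^ (r - ((i : ℕ) + 1)))) :=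
      Finset.sum_congr rfl fun i _ => (hterm i).symm
    rw [h3, ← Finset.mul_sum, ← mul_add, hzr0, mul_zero]
  have hψh0 : ψ h0 = 0 := by
    rw [homega, hh0def, map_add, map_pow, Polynomial.aeval_X, map_sum]
    have h4 : ∀ i : Fin r, Polynomial.aeval (x * z)
        (Polynomial.C (a i * f) * Polynomial.X ^ (r - ((i : ℕ) + 1))) =
        algebraMap A _ (a i * f) *
          (x ^ (r - ((i : ℕ) + 1)) * z ^ (r - ((i : ℕ) + 1))) := by
      intro i
      rw [map_mul, Polynomial.aeval_C, map_pow, Polynomial.aeval_X, mul_pow]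
    rw [Finset.sum_congr rfl fun i _ => h4 i, mul_pow]
    exact hxzr
  have hker1 : RingHom.ker ψ = J := by
    apply le_antisymm
    · -- ker ⊆ J
      intro q hq
      have hq0 : ψ q = 0 := hq
      have hdivq := Polynomial.modByMonic_add_div q h0
      set q' := q %ₘ h0 with hq'
      have hrem : ψ q' = 0 := by
        have h5 : q' = q - h0 * (q /ₘ h0) := by
          rw [eq_sub_iff_add_eq]; exact hdivq
        rw [h5, map_sub, map_mul, hq0, hψh0, zero_mul, sub_zero]
      have hdegq : q'.natDegree < r := by
        by_cases hq'0 : q' = 0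
        · rw [hq'0]; simpa using hr
        · have h6 := Polynomial.degree_modByMonic_lt q hh0m
          rw [hd0] at h6
          exact (Polynomial.natDegree_lt_iff_degree_lt hq'0).2 h6
      have hexp : ψ q' = ∑ n ∈ Finset.range r, q'.coeff n • (x * z) ^ n := by
        rw [homega]
        exact Polynomial.aeval_eq_sum_range' hdegq (x * z)
      have hsum0 : ∑ n ∈ Finset.range r, q'.coeff n • (x * z) ^ n = 0 := by
        rw [← hexp, hrem]
      have hcoefflt : ∀ n, n < r → q'.coeff n = 0 := by
        intro n hn
        have hA1 : vB.repr (∑ m ∈ Finset.range r, q'.coeff m • (x * z) ^ m) =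
            ∑ m ∈ Finset.range r, vB.repr (q'.coeff m • (x * z) ^ m) :=
          map_sum vB.repr _ _
        have h8 : (∑ m ∈ Finset.range r, vB.repr (q'.coeff m • (x * z) ^ m))
            (⟨n, lt_of_lt_of_le hn hrs⟩, ⟨n, hn⟩) = 0 := by
          rw [← hA1, hsum0, map_zero]
          rfl
        rw [Finsupp.finset_sum_apply] at h8
        have h9 : ∀ m ∈ Finset.range r,
            (vB.repr (q'.coeff m • (x * z) ^ m)) (⟨n, lt_of_lt_of_le hn hrs⟩, ⟨n, hn⟩) =
            if m = n then q'.coeff m else 0 := by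
          intro m hm
          rw [Finset.mem_range] at hm
          rw [hxzpow m hm, map_smul, Module.Basis.repr_self, Finsupp.smul_apply,
            Finsupp.single_apply]
          have hiff : ((⟨m, lt_of_lt_of_le hm hrs⟩ : Fin s), (⟨m, hm⟩ : Fin r)) =
              ((⟨n, lt_of_lt_of_le hn hrs⟩ : Fin s), (⟨n, hn⟩ : Fin r)) ↔ m = n := by
            constructor
            · intro h; exact congrArg (fun p => ((p.2 : Fin r) : ℕ)) h
            · rintro rfl; rfl
          by_cases hmn : m = n
          · rw [if_pos (hiff.2 hmn), if_pos hmn]; simp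
          · rw [if_neg (fun hcon => hmn (hiff.1 hcon)), if_neg hmn, smul_zero]
        rw [Finset.sum_congr rfl h9, Finset.sum_ite_eq' (Finset.range r) n q'.coeff,
          if_pos (Finset.mem_range.2 hn)] at h8
        exact h8
      have hcoeff : ∀ n, q'.coeff n = 0 := by
        intro n
        by_cases hn : n < r
        · exact hcoefflt n hn
        · exact Polynomial.coeff_eq_zero_of_natDegree_lt (lt_of_lt_of_le hdegq (by omega))
      have hq'z : q' = 0 := Polynomial.ext fun n => by rw [hcoeff n]; simp
      have h7 := hdivq
      rw [hq'z, zero_add] at h7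
      rw [hJ, ← h7]
      exact Ideal.mul_mem_right _ _ (Ideal.subset_span rfl)
    · -- J ⊆ ker
      rw [hJ, Ideal.span_le]
      intro u hu
      rw [Set.mem_singleton_iff] at hu
      subst hu
      exact hψh0
  refine ⟨hker1, ?_⟩
  ext b
  constructor
  · -- range ⊆ invariants
    rintro ⟨q, rfl⟩ ζ hζs p hp
    have hζ0 : ζ ≠ 0 := by
      intro h
      rw [h, zero_pow hs.ne'] at hζs
      exact zero_ne_one hζs
    -- σ ζ fixes X 0 * X 1
    have hmul1 : algebraMap ℂ A ζ * algebraMap ℂ A ζ⁻¹ = 1 := by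
      rw [← map_mul, mul_inv_cancel₀ hζ0, map_one]
    have hfix : σ ζ (X 0 * X 1) = X 0 * X 1 := by
      rw [hσ, map_mul, aeval_X, aeval_X]
      rw [if_pos rfl, if_neg (by decide : (1 : Fin 2) ≠ 0)]
      have hCC : (C (algebraMap ℂ A ζ) : MvPolynomial (Fin 2) A) *
          C (algebraMap ℂ A ζ⁻¹) = 1 := by
        rw [← C_mul, hmul1, C_1]
      linear_combination (X 0 * X 1 : MvPolynomial (Fin 2) A) * hCC
    -- σ ζ maps I into I
    have hkey : ∀ i : Fin r, ζ ^ (s - ((i : ℕ) + 1)) * ζ⁻¹ ^ (r - ((i : ℕ) + 1)) =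
        ζ⁻¹ ^ r := by
      intro i
      have hi1 : (i : ℕ) + 1 ≤ r := i.2
      apply mul_right_cancel₀ (pow_ne_zero r hζ0)
      have e1 : ζ⁻¹ ^ (r - ((i : ℕ) + 1)) * ζ ^ r =
          ζ⁻¹ ^ (r - ((i : ℕ) + 1)) * (ζ ^ (r - ((i : ℕ) + 1)) * ζ ^ ((i : ℕ) + 1)) := by
        rw [← pow_add]
        congr 2
        omega
      calc ζ ^ (s - ((i : ℕ) + 1)) * ζ⁻¹ ^ (r - ((i : ℕ) + 1)) * ζ ^ r
          = ζ ^ (s - ((i : ℕ) + 1)) * (ζ⁻¹ ^ (r - ((i : ℕ) + 1)) * ζ ^ r) := by ring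
        _ = ζ ^ (s - ((i : ℕ) + 1)) * (ζ⁻¹ ^ (r - ((i : ℕ) + 1)) *
              (ζ ^ (r - ((i : ℕ) + 1)) * ζ ^ ((i : ℕ) + 1))) := by rw [e1]
        _ = ζ ^ (s - ((i : ℕ) + 1)) * ((ζ⁻¹ * ζ) ^ (r - ((i : ℕ) + 1)) * ζ ^ ((i : ℕ) + 1)) := by
              rw [mul_pow]; ring
        _ = ζ ^ (s - ((i : ℕ) + 1)) * ζ ^ ((i : ℕ) + 1) := by
              rw [inv_mul_cancel₀ hζ0, one_pow, one_mul]
        _ = ζ ^ s := by rw [← pow_add]; congr 1; omega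
        _ = 1 := hζs
        _ = ζ⁻¹ ^ r * ζ ^ r := by
              rw [← mul_pow, inv_mul_cancel₀ hζ0, one_pow]
    have hσG1 : σ ζ (X 1 ^ r + ∑ i : Fin r,
        C (a i) * X 0 ^ (s - ((i : ℕ) + 1)) * X 1 ^ (r - ((i : ℕ) + 1))) =
        C (algebraMap ℂ A (ζ⁻¹ ^ r)) * (X 1 ^ r + ∑ i : Fin r,
          C (a i) * X 0 ^ (s - ((i : ℕ) + 1)) * X 1 ^ (r - ((i : ℕ) + 1))) := by
      rw [hσ, map_add, map_pow, aeval_X, if_neg (by decide : (1 : Fin 2) ≠ 0), map_sum]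
      rw [mul_add, Finset.mul_sum]
      congr 1
      · rw [mul_pow, ← C_pow, ← map_pow]
      · refine Finset.sum_congr rfl fun i _ => ?_
        rw [map_mul, map_mul, aeval_C, map_pow, map_pow, aeval_X, aeval_X,
          if_pos rfl, if_neg (by decide : (1 : Fin 2) ≠ 0), algebraMap_eq]
        rw [mul_pow, mul_pow, ← C_pow, ← C_pow, ← map_pow, ← map_pow]
        have hCC : C (algebraMap ℂ A (ζ ^ (s - ((i : ℕ) + 1)))) *
            C (algebraMap ℂ A (ζ⁻¹ ^ (r - ((i : ℕ) + 1)))) =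
            (C (algebraMap ℂ A (ζ⁻¹ ^ r)) : MvPolynomial (Fin 2) A) := by
          rw [← C_mul, ← map_mul, hkey i]
        linear_combination (C (a i) * X 0 ^ (s - ((i : ℕ) + 1)) *
          X 1 ^ (r - ((i : ℕ) + 1)) : MvPolynomial (Fin 2) A) * hCC
    have hσG2 : σ ζ (X 0 ^ s - C f) = (X 0 ^ s - C f : MvPolynomial (Fin 2) A) := by
      rw [hσ, map_sub, map_pow, aeval_X, if_pos rfl, aeval_C]
      rw [mul_pow, ← C_pow, ← map_pow, hζs, map_one, C_1, one_mul, algebraMap_eq]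
    have hσI : ∀ u ∈ I, σ ζ u ∈ I := by
      have hle : I ≤ Ideal.comap (σ ζ) I := by
        conv_lhs => rw [hI]
        rw [Ideal.span_le]
        intro u hu
        rcases hu with rfl | hu
        · show σ ζ _ ∈ I
          rw [hσG1]
          exact Ideal.mul_mem_left _ _ hG1
        · rw [Set.mem_singleton_iff] at hu
          subst hu
          show σ ζ _ ∈ I
          rw [hσG2]
          exact hG2
      intro u hu
      exact hle hu
    -- conclude invariance
    have hmkp0 : mkq (Polynomial.aeval (X 0 * X 1 : MvPolynomial (Fin 2) A) q) = ψ q := by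
      rw [hψ]
      exact (Polynomial.aeval_algHom_apply (Ideal.Quotient.mkₐ A I) (X 0 * X 1) q).symm
    have hσp0 : σ ζ (Polynomial.aeval (X 0 * X 1 : MvPolynomial (Fin 2) A) q) =
        Polynomial.aeval (X 0 * X 1 : MvPolynomial (Fin 2) A) q := by
      rw [← Polynomial.aeval_algHom_apply (σ ζ) (X 0 * X 1) q, hfix]
    have hpd : p - Polynomial.aeval (X 0 * X 1 : MvPolynomial (Fin 2) A) q ∈ I := by
      rw [← Ideal.Quotient.eq]
      exact hp.trans hmkp0.symm
    have h10 : σ ζ p - σ ζ (Polynomial.aeval (X 0 * X 1 : MvPolynomial (Fin 2) A) q) ∈ I := by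
      rw [← map_sub]
      exact hσI _ hpd
    have h11 : mkq (σ ζ p) = mkq (σ ζ (Polynomial.aeval (X 0 * X 1 : MvPolynomial (Fin 2) A) q)) :=
      Ideal.Quotient.eq.2 h10
    show mkq (σ ζ p) = ψ q
    rw [h11, hσp0, hmkp0]
  · -- invariants ⊆ range
    intro hb
    set ζ0 : ℂ := Complex.exp (2 * Real.pi * Complex.I / s) with hζ0def
    have hprim : IsPrimitiveRoot ζ0 s := Complex.isPrimitiveRoot_exp s hs.ne'
    have hζ0s : ζ0 ^ s = 1 := hprim.pow_eq_one
    have hζ0ne : ζ0 ≠ 0 := by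
      intro h
      rw [h, zero_pow hs.ne'] at hζ0s
      exact zero_ne_one hζ0s
    set c : (Fin s × Fin r) →₀ A := vB.repr b with hc
    set p0 : MvPolynomial (Fin 2) A := ∑ ij : Fin s × Fin r,
      C (c ij) * (X 0 ^ (ij.1 : ℕ) * X 1 ^ (ij.2 : ℕ)) with hp0
    have hterm0 : ∀ ij : Fin s × Fin r,
        mkq (C (c ij) * (X 0 ^ (ij.1 : ℕ) * X 1 ^ (ij.2 : ℕ))) = c ij • vB ij := by
      intro ij
      rw [map_mul, hCmk, ← hvB, hsmul]
    have hmk0 : mkq p0 = b := by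
      rw [hp0, map_sum, Finset.sum_congr rfl fun ij _ => hterm0 ij]
      exact vB.sum_repr b
    have hb0 := hb ζ0 hζ0s p0 hmk0
    have hσterm : ∀ ij : Fin s × Fin r,
        mkq (σ ζ0 (C (c ij) * (X 0 ^ (ij.1 : ℕ) * X 1 ^ (ij.2 : ℕ)))) =
        (algebraMap ℂ A (ζ0 ^ (ij.1 : ℕ) * ζ0⁻¹ ^ (ij.2 : ℕ)) * c ij) • vB ij := by
      intro ij
      have h1 : σ ζ0 (C (c ij) * (X 0 ^ (ij.1 : ℕ) * X 1 ^ (ij.2 : ℕ))) =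
          C (algebraMap ℂ A (ζ0 ^ (ij.1 : ℕ) * ζ0⁻¹ ^ (ij.2 : ℕ)) * c ij) *
            (X 0 ^ (ij.1 : ℕ) * X 1 ^ (ij.2 : ℕ)) := by
        rw [hσ, map_mul, aeval_C, map_mul, map_pow, map_pow, aeval_X, aeval_X,
          if_pos rfl, if_neg (by decide : (1 : Fin 2) ≠ 0), algebraMap_eq]
        rw [mul_pow, mul_pow, ← C_pow, ← C_pow, ← map_pow, ← map_pow]
        rw [C_mul, map_mul, C_mul]
        ring
      rw [h1, map_mul, hCmk, ← hvB, hsmul]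
    have hσp0 : mkq (σ ζ0 p0) = ∑ ij : Fin s × Fin r,
        (algebraMap ℂ A (ζ0 ^ (ij.1 : ℕ) * ζ0⁻¹ ^ (ij.2 : ℕ)) * c ij) • vB ij := by
      rw [hp0, map_sum, map_sum]
      exact Finset.sum_congr rfl fun ij _ => hσterm ij
    -- coordinates
    have hcoord : ∀ kl : Fin s × Fin r,
        algebraMap ℂ A (ζ0 ^ (kl.1 : ℕ) * ζ0⁻¹ ^ (kl.2 : ℕ)) * c kl = c kl := by
      intro kl
      have hA1 : vB.repr (∑ ij : Fin s × Fin r,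
          (algebraMap ℂ A (ζ0 ^ (ij.1 : ℕ) * ζ0⁻¹ ^ (ij.2 : ℕ)) * c ij) • vB ij) =
          ∑ ij : Fin s × Fin r, vB.repr
            ((algebraMap ℂ A (ζ0 ^ (ij.1 : ℕ) * ζ0⁻¹ ^ (ij.2 : ℕ)) * c ij) • vB ij) :=
        map_sum vB.repr _ _
      have h5 : (∑ ij : Fin s × Fin r, vB.repr
          ((algebraMap ℂ A (ζ0 ^ (ij.1 : ℕ) * ζ0⁻¹ ^ (ij.2 : ℕ)) * c ij) • vB ij)) kl
          = c kl := by
        rw [← hA1, ← hσp0, hb0, ← hc]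
      rw [Finsupp.finset_sum_apply] at h5
      have h9 : ∀ ij ∈ (Finset.univ : Finset (Fin s × Fin r)),
          (vB.repr ((algebraMap ℂ A (ζ0 ^ (ij.1 : ℕ) * ζ0⁻¹ ^ (ij.2 : ℕ)) * c ij) • vB ij)) kl =
          if ij = kl then algebraMap ℂ A (ζ0 ^ (ij.1 : ℕ) * ζ0⁻¹ ^ (ij.2 : ℕ)) * c ij else 0 := by
        intro ij _
        rw [map_smul, Module.Basis.repr_self, Finsupp.smul_apply, Finsupp.single_apply]
        by_cases hmn : ij = kl
        · rw [if_pos hmn, if_pos hmn]; simp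
        · rw [if_neg hmn, if_neg hmn, smul_zero]
      rw [Finset.sum_congr rfl h9, Finset.sum_ite_eq' Finset.univ kl,
        if_pos (Finset.mem_univ kl)] at h5
      exact h5
    have hoff : ∀ kl : Fin s × Fin r, (kl.1 : ℕ) ≠ (kl.2 : ℕ) → c kl = 0 := by
      intro kl hne
      have hw : ζ0 ^ (kl.1 : ℕ) * ζ0⁻¹ ^ (kl.2 : ℕ) ≠ 1 := by
        intro h1
        rw [inv_pow] at h1
        rw [mul_inv_eq_one₀ (pow_ne_zero _ hζ0ne)] at h1
        exact hne (hprim.pow_inj kl.1.2 (lt_of_lt_of_le kl.2.2 hrs) h1)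
      have hunit : IsUnit (algebraMap ℂ A (ζ0 ^ (kl.1 : ℕ) * ζ0⁻¹ ^ (kl.2 : ℕ)) - 1) := by
        have h2 : algebraMap ℂ A (ζ0 ^ (kl.1 : ℕ) * ζ0⁻¹ ^ (kl.2 : ℕ)) - 1 =
            algebraMap ℂ A (ζ0 ^ (kl.1 : ℕ) * ζ0⁻¹ ^ (kl.2 : ℕ) - 1) := by
          rw [map_sub, map_one]
        rw [h2]
        exact (isUnit_iff_ne_zero.mpr (sub_ne_zero.mpr hw)).map (algebraMap ℂ A)
      have h6 : (algebraMap ℂ A (ζ0 ^ (kl.1 : ℕ) * ζ0⁻¹ ^ (kl.2 : ℕ)) - 1) * c kl = 0 := by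
        rw [sub_mul, one_mul, hcoord kl, sub_self]
      exact (hunit.mul_right_eq_zero).mp h6
    -- assemble the preimage
    set dmap : Fin r → Fin s × Fin r := fun j => (⟨(j : ℕ), lt_of_lt_of_le j.2 hrs⟩, j)
      with hdmap
    have hdinj : ∀ j1 ∈ (Finset.univ : Finset (Fin r)), ∀ j2 ∈ Finset.univ,
        dmap j1 = dmap j2 → j1 = j2 := by
      intro j1 _ j2 _ h
      exact congrArg Prod.snd h
    refine ⟨∑ j : Fin r, Polynomial.C (c (dmap j)) * Polynomial.X ^ (j : ℕ), ?_⟩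
    have hψj : ψ (∑ j : Fin r, Polynomial.C (c (dmap j)) * Polynomial.X ^ (j : ℕ)) =
        ∑ j : Fin r, c (dmap j) • vB (dmap j) := by
      rw [homega, map_sum]
      refine Finset.sum_congr rfl fun j _ => ?_
      rw [map_mul, Polynomial.aeval_C, map_pow, Polynomial.aeval_X, hxzpow _ j.2, hsmul]
    rw [hψj]
    have hsplit : ∑ ij : Fin s × Fin r, c ij • vB ij = ∑ j : Fin r, c (dmap j) • vB (dmap j) := by
      have himg : ∑ ij ∈ Finset.univ.image dmap, c ij • vB ij =
          ∑ j : Fin r, c (dmap j) • vB (dmap j) := Finset.sum_image hdinj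
      rw [← himg]
      refine (Finset.sum_subset (Finset.subset_univ _) ?_).symm
      intro ij _ hnot
      have hne : (ij.1 : ℕ) ≠ (ij.2 : ℕ) := by
        intro heq
        refine hnot (Finset.mem_image.2 ⟨ij.2, Finset.mem_univ _, ?_⟩)
        rw [hdmap]
        ext
        · exact heq.symm
        · rfl
      rw [hoff ij hne, zero_smul]
    rw [← hsplit]
    exact vB.sum_repr b
end
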